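/- Rado's theorem: Let A ∈ ℂ^{n×n} with charpoly(A) = ∏ᵢ(X − λᵢ), let x₁,…,xₚ be linearly independent eigenvectors with Axⱼ = λⱼxⱼ, X = [x₁ … xₚ], Ω = diag(λ₁,…,λₚ), and C ∈ ℂ^{p×n} arbitrary. Then charpoly(A + XC) = ∏_{j=1}^{p}(X − μⱼ) · ∏_{k=p+1}^{n}(X − λ_k), where μ₁,…,μₚ are the eigenvalues of Ω + CX. -/

import Mathlib

open Matrix Polynomial

lemma rado_eval_charpoly {m : ℕ} (M : Matrix (Fin m) (Fin m) ℂ) (t : ℂ) :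
    eval t M.charpoly = (t • (1 : Matrix (Fin m) (Fin m) ℂ) - M).det := by
  rw [charpoly, ← coe_evalRingHom, RingHom.map_det]
  congr 1
  ext i j
  rcases eq_or_ne i j with h | h
  · subst h; simp [charmatrix_apply_eq]
  · simp [charmatrix_apply_ne _ _ _ h, Matrix.one_apply_ne h]

lemma rado_charpoly_diagonal {m : ℕ} (d : Fin m → ℂ) :
    (Matrix.diagonal d).charpoly = ∏ i, (X - C (d i)) := by
  rw [charpoly]
  have : charmatrix (Matrix.diagonal d) = Matrix.diagonal (fun i => X - C (d i)) := by
    ext i j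
    rcases eq_or_ne i j with h | h
    · subst h; simp [charmatrix_apply_eq]
    · simp [charmatrix_apply_ne _ _ _ h, Matrix.diagonal_apply_ne _ h]
  rw [this, det_diagonal]

lemma rado_det_key {n p : ℕ} (A : Matrix (Fin n) (Fin n) ℂ)
    (Xm : Matrix (Fin n) (Fin p) ℂ) (Cm : Matrix (Fin p) (Fin n) ℂ)
    (Ω : Matrix (Fin p) (Fin p) ℂ) (hAX : A * Xm = Xm * Ω) (t : ℂ)
    (hM : IsUnit (t • (1 : Matrix (Fin n) (Fin n) ℂ) - A).det)
    (hN : IsUnit (t • (1 : Matrix (Fin p) (Fin p) ℂ) - Ω).det) :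
    (t • 1 - (A + Xm * Cm)).det * (t • (1 : Matrix (Fin p) (Fin p) ℂ) - Ω).det
      = (t • (1 : Matrix (Fin n) (Fin n) ℂ) - A).det * (t • 1 - (Ω + Cm * Xm)).det := by
  set M := t • (1 : Matrix (Fin n) (Fin n) ℂ) - A with hMdef
  set N := t • (1 : Matrix (Fin p) (Fin p) ℂ) - Ω with hNdef
  have hMX : M * Xm = Xm * N := by
    simp only [hMdef, hNdef, Matrix.sub_mul, Matrix.mul_sub, Matrix.smul_mul, Matrix.mul_smul,
      Matrix.one_mul, Matrix.mul_one, hAX]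
  have hMinv : M * M⁻¹ = 1 := Matrix.mul_nonsing_inv M hM
  have hMinv' : M⁻¹ * M = 1 := Matrix.nonsing_inv_mul M hM
  have hNinv : N * N⁻¹ = 1 := Matrix.mul_nonsing_inv N hN
  have hMiX : M⁻¹ * Xm = Xm * N⁻¹ := by
    calc M⁻¹ * Xm = M⁻¹ * Xm * (N * N⁻¹) := by rw [hNinv, Matrix.mul_one]
    _ = M⁻¹ * (M * Xm) * N⁻¹ := by
        rw [hMX]; simp only [Matrix.mul_assoc]
    _ = Xm * N⁻¹ := by rw [← Matrix.mul_assoc, hMinv', Matrix.one_mul]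
  have h1 : t • (1 : Matrix (Fin n) (Fin n) ℂ) - (A + Xm * Cm) = M * (1 - M⁻¹ * (Xm * Cm)) := by
    rw [Matrix.mul_sub, Matrix.mul_one, ← Matrix.mul_assoc, hMinv, Matrix.one_mul, hMdef,
      sub_sub]
  have h2 : (1 - M⁻¹ * (Xm * Cm)).det = (1 - Cm * (M⁻¹ * Xm)).det := by
    rw [← Matrix.mul_assoc, Matrix.det_one_sub_mul_comm]
  have h3 : (1 : Matrix (Fin p) (Fin p) ℂ) - Cm * (Xm * N⁻¹) = (N - Cm * Xm) * N⁻¹ := by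
    rw [Matrix.sub_mul, hNinv, Matrix.mul_assoc]
  have h4 : t • (1 : Matrix (Fin p) (Fin p) ℂ) - (Ω + Cm * Xm) = N - Cm * Xm := by
    rw [hNdef, sub_sub]
  rw [h1, Matrix.det_mul, h2, hMiX, h3, Matrix.det_mul, h4]
  rw [Matrix.det_nonsing_inv]
  field_simp [hN.ne_zero]
  rw [mul_assoc (M.det * (N - Cm * Xm).det), Ring.inverse_mul_cancel _ hN, mul_one]

lemma rado_poly_id {n p : ℕ} (A : Matrix (Fin n) (Fin n) ℂ)
    (Xm : Matrix (Fin n) (Fin p) ℂ) (Cm : Matrix (Fin p) (Fin n) ℂ)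
    (Ω : Matrix (Fin p) (Fin p) ℂ) (hAX : A * Xm = Xm * Ω) :
    (A + Xm * Cm).charpoly * Ω.charpoly = A.charpoly * (Ω + Cm * Xm).charpoly := by
  apply eq_of_infinite_eval_eq
  have hfin : ({t : ℂ | IsRoot A.charpoly t} ∪ {t : ℂ | IsRoot Ω.charpoly t}).Finite :=
    (finite_setOf_isRoot (charpoly_monic A).ne_zero).union
      (finite_setOf_isRoot (charpoly_monic Ω).ne_zero)
  apply Set.Infinite.mono (s := ({t : ℂ | IsRoot A.charpoly t} ∪ {t : ℂ | IsRoot Ω.charpoly t})ᶜ)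
  · intro t ht
    simp only [Set.mem_compl_iff, Set.mem_union, Set.mem_setOf_eq, not_or] at ht
    obtain ⟨hA, hΩ⟩ := ht
    have hMA : IsUnit (t • (1 : Matrix (Fin n) (Fin n) ℂ) - A).det := by
      rw [isUnit_iff_ne_zero, ← rado_eval_charpoly]; exact hA
    have hMΩ : IsUnit (t • (1 : Matrix (Fin p) (Fin p) ℂ) - Ω).det := by
      rw [isUnit_iff_ne_zero, ← rado_eval_charpoly]; exact hΩ
    simp only [Set.mem_setOf_eq, eval_mul, rado_eval_charpoly]
    exact rado_det_key A Xm Cm Ω hAX t hMA hMΩ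
  · exact hfin.infinite_compl

/-- Rado's theorem: the update `A + X C` along `p` linearly independent eigenvectors replaces
the corresponding `p` eigenvalues of `A` by the eigenvalues of `Ω + C X`, keeping the others. -/
theorem stmt17 {n p : ℕ} (hp : p ≤ n) (A : Matrix (Fin n) (Fin n) ℂ)
    (lam : Fin n → ℂ) (hchar : A.charpoly = ∏ i, (X - C (lam i)))
    (x : Fin p → (Fin n → ℂ)) (hli : LinearIndependent ℂ x)
    (heig : ∀ j, A.mulVec (x j) = lam (Fin.castLE hp j) • x j)
    (Xm : Matrix (Fin n) (Fin p) ℂ) (hXm : Xm = Matrix.of fun i j => x j i)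
    (Cm : Matrix (Fin p) (Fin n) ℂ)
    (Ω : Matrix (Fin p) (Fin p) ℂ) (hΩ : Ω = Matrix.diagonal fun j => lam (Fin.castLE hp j))
    (mu : Fin p → ℂ) (hmu : (Ω + Cm * Xm).charpoly = ∏ j, (X - C (mu j))) :
    (A + Xm * Cm).charpoly =
      (∏ j, (X - C (mu j))) *
        ∏ k ∈ Finset.univ.filter (fun k : Fin n => p ≤ (k : ℕ)), (X - C (lam k)) := by
  have hAX : A * Xm = Xm * Ω := by
    subst hXm hΩ
    ext i j
    have h := congrFun (heig j) i
    simp only [Matrix.mulVec, dotProduct, Pi.smul_apply, smul_eq_mul] at h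
    rw [Matrix.mul_apply, Matrix.mul_apply]
    simp only [Matrix.of_apply]
    rw [h, Finset.sum_eq_single j (fun b _ hb => by
      simp [Matrix.diagonal_apply_ne _ hb]) (by simp)]
    simp [mul_comm]
  have hΩchar : Ω.charpoly = ∏ j : Fin p, (X - C (lam (Fin.castLE hp j))) := by
    rw [hΩ, rado_charpoly_diagonal]
  -- split the product over Fin n
  have hmap : (Finset.univ.map (Fin.castLEEmb hp)) =
      Finset.univ.filter (fun k : Fin n => (k : ℕ) < p) := by
    ext k
    simp only [Finset.mem_map, Finset.mem_univ, true_and, Finset.mem_filter,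
      Fin.castLEEmb_apply]
    constructor
    · rintro ⟨j, rfl⟩; exact j.isLt
    · intro hk; exact ⟨⟨(k : ℕ), hk⟩, by ext; simp⟩
  have hsplit : (∏ i : Fin n, (X - C (lam i))) =
      (∏ j : Fin p, (X - C (lam (Fin.castLE hp j)))) *
        ∏ k ∈ Finset.univ.filter (fun k : Fin n => p ≤ (k : ℕ)), (X - C (lam k)) := by
    rw [← Finset.prod_filter_mul_prod_filter_not Finset.univ (fun k : Fin n => (k : ℕ) < p)]
    congr 1
    · rw [← hmap, Finset.prod_map]
      rfl
    · apply Finset.prod_congr _ (fun _ _ => rfl)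
      ext k; simp [not_lt]
  have key := rado_poly_id A Xm Cm Ω hAX
  rw [hchar, hsplit, hmu, hΩchar] at key
  have hne : (∏ j : Fin p, (X - C (lam (Fin.castLE hp j)))) ≠ 0 := by
    rw [← hΩchar]; exact (charpoly_monic Ω).ne_zero
  apply mul_right_cancel₀ hne
  rw [key]
  ring
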